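/- Theorem (Upper bound of the expected hidden embeddings' difference): Let Z = P H W be the exact hidden embedding where P is the propagation matrix built from edge set E, and let Z̃ = P̃ H W be the embedding built by sampling |E_s| edges i.i.d., each edge (v,u) with probability p_{(v,u)}, with the importance-weighted propagation matrix (P̃)_{v,u} = P_{v,u}/(|E_s| p_{(v,u)}) on sampled edges and 0 otherwise. Assume ‖H_{u,*} W‖₂ ≤ ξ for every node u. Then E[‖Z̃ − Z‖_F²] ≤ (1/|E_s|) ∑_{(v,u)∈E} ‖P_{*,u}‖₂² ξ² / p_{(v,u)}. -/

import Mathlib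

open Finset

/-- Squared Frobenius norm of a real matrix. -/
noncomputable def frobSq {m n : Type*} [Fintype m] [Fintype n]
    (M : Matrix m n ℝ) : ℝ := ∑ i, ∑ j, (M i j) ^ 2


lemma aux_key {α : Type*} [Fintype α] (s : ℕ) (q : α → ℝ) (c : Fin s → α → ℝ) :
    ∑ ω : Fin s → α, ∏ i, (q (ω i) * c i (ω i)) = ∏ i, ∑ e, q e * c i e :=
  (Fintype.prod_sum fun i e => q e * c i e).symm

lemma aux_one {α : Type*} [Fintype α] {s : ℕ} (q : α → ℝ) (hq : ∑ e, q e = 1)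
    (i₀ : Fin s) (g : α → ℝ) :
    ∑ ω : Fin s → α, (∏ i, q (ω i)) * g (ω i₀) = ∑ e, q e * g e := by
  have h := aux_key s q (fun i e => if i = i₀ then g e else 1)
  have hL : ∀ ω : Fin s → α, (∏ i, (q (ω i) * if i = i₀ then g (ω i) else 1))
      = (∏ i, q (ω i)) * g (ω i₀) := by
    intro ω
    rw [Finset.prod_mul_distrib]
    congr 1
    simp [Finset.prod_ite_eq']
  have hR : (∏ i : Fin s, ∑ e, q e * if i = i₀ then g e else 1) = ∑ e, q e * g e := by
    have h1 : ∀ i : Fin s, (∑ e, q e * if i = i₀ then g e else 1)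
        = if i = i₀ then ∑ e, q e * g e else 1 := by
      intro i; split <;> simp [hq]
    rw [Finset.prod_congr rfl fun i _ => h1 i]
    simp [Finset.prod_ite_eq']
  calc ∑ ω : Fin s → α, (∏ i, q (ω i)) * g (ω i₀)
      = ∑ ω : Fin s → α, ∏ i, (q (ω i) * if i = i₀ then g (ω i) else 1) := by
        exact Finset.sum_congr rfl fun ω _ => (hL ω).symm
    _ = ∑ e, q e * g e := by rw [h, hR]

lemma aux_two {α : Type*} [Fintype α] {s : ℕ} (q : α → ℝ) (hq : ∑ e, q e = 1)
    {i₀ j₀ : Fin s} (hij : i₀ ≠ j₀) (g h : α → ℝ) :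
    ∑ ω : Fin s → α, (∏ i, q (ω i)) * (g (ω i₀) * h (ω j₀))
      = (∑ e, q e * g e) * (∑ e, q e * h e) := by
  have hk := aux_key s q
    (fun i e => (if i = i₀ then g e else 1) * (if i = j₀ then h e else 1))
  have hL : ∀ ω : Fin s → α,
      (∏ i, (q (ω i) * ((if i = i₀ then g (ω i) else 1) * (if i = j₀ then h (ω i) else 1))))
      = (∏ i, q (ω i)) * (g (ω i₀) * h (ω j₀)) := by
    intro ω
    rw [show (fun i => q (ω i) * ((if i = i₀ then g (ω i) else 1) * (if i = j₀ then h (ω i) else 1)))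
        = fun i => q (ω i) * (if i = i₀ then g (ω i) else 1) * (if i = j₀ then h (ω i) else 1)
        from funext fun i => by ring]
    rw [Finset.prod_mul_distrib, Finset.prod_mul_distrib]
    simp [Finset.prod_ite_eq', mul_assoc]
  have hR : (∏ i : Fin s, ∑ e, q e * ((if i = i₀ then g e else 1) * (if i = j₀ then h e else 1)))
      = (∑ e, q e * g e) * (∑ e, q e * h e) := by
    have h1 : ∀ i : Fin s, (∑ e, q e * ((if i = i₀ then g e else 1) * (if i = j₀ then h e else 1)))
        = (if i = i₀ then ∑ e, q e * g e else 1) * (if i = j₀ then ∑ e, q e * h e else 1) := by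
      intro i
      rcases eq_or_ne i i₀ with rfl | h1
      · simp [hij, hq]
      · rcases eq_or_ne i j₀ with rfl | h2
        · simp [h1, hq]
        · simp [h1, h2, hq]
    rw [Finset.prod_congr rfl fun i _ => h1 i, Finset.prod_mul_distrib]
    simp [Finset.prod_ite_eq']
  calc ∑ ω : Fin s → α, (∏ i, q (ω i)) * (g (ω i₀) * h (ω j₀))
      = ∑ ω : Fin s → α,
          ∏ i, (q (ω i) * ((if i = i₀ then g (ω i) else 1) * (if i = j₀ then h (ω i) else 1))) :=
        Finset.sum_congr rfl fun ω _ => (hL ω).symm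
    _ = _ := by rw [hk, hR]

lemma aux_var {α : Type*} [Fintype α] {s : ℕ} (hs : 0 < s) (q : α → ℝ)
    (hq0 : ∀ e, 0 ≤ q e) (hq : ∑ e, q e = 1) (g : α → ℝ) :
    ∑ ω : Fin s → α, (∏ i, q (ω i)) * ((s : ℝ)⁻¹ * (∑ i, g (ω i)) - ∑ e, q e * g e) ^ 2
      ≤ (s : ℝ)⁻¹ * ∑ e, q e * g e ^ 2 := by
  set m : ℝ := ∑ e, q e * g e with hm
  have hsne : (s : ℝ) ≠ 0 := Nat.cast_ne_zero.mpr hs.ne'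
  have hX0 : ∑ e, q e * (g e - m) = 0 := by
    simp only [mul_sub, Finset.sum_sub_distrib, ← Finset.mul_sum, ← Finset.sum_mul, hq, ← hm]
    ring
  have hsq : ∀ ω : Fin s → α,
      ((s : ℝ)⁻¹ * (∑ i, g (ω i)) - m) ^ 2
      = ((s : ℝ)⁻¹) ^ 2 * ∑ i, ∑ j, (g (ω i) - m) * (g (ω j) - m) := by
    intro ω
    have h1 : (s : ℝ)⁻¹ * (∑ i, g (ω i)) - m = (s : ℝ)⁻¹ * ∑ i, (g (ω i) - m) := by
      rw [Finset.sum_sub_distrib]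
      simp [Finset.card_univ, mul_sub, hsne]
    rw [h1, mul_pow, sq (∑ i, (g (ω i) - m)), Finset.sum_mul_sum]
  have hmain : ∑ ω : Fin s → α, (∏ i, q (ω i)) * ((s : ℝ)⁻¹ * (∑ i, g (ω i)) - m) ^ 2
      = ((s : ℝ)⁻¹) ^ 2 * ∑ i : Fin s, ∑ j : Fin s,
          ∑ ω : Fin s → α, (∏ i', q (ω i')) * ((g (ω i) - m) * (g (ω j) - m)) := by
    calc ∑ ω : Fin s → α, (∏ i, q (ω i)) * ((s : ℝ)⁻¹ * (∑ i, g (ω i)) - m) ^ 2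
        = ∑ ω : Fin s → α, ∑ i : Fin s, ∑ j : Fin s,
            ((s : ℝ)⁻¹) ^ 2 * ((∏ i', q (ω i')) * ((g (ω i) - m) * (g (ω j) - m))) := by
          refine Finset.sum_congr rfl fun ω _ => ?_
          rw [hsq ω]
          simp_rw [Finset.mul_sum]
          exact Finset.sum_congr rfl fun i _ => Finset.sum_congr rfl fun j _ => by ring
      _ = ∑ i : Fin s, ∑ j : Fin s, ∑ ω : Fin s → α,
            ((s : ℝ)⁻¹) ^ 2 * ((∏ i', q (ω i')) * ((g (ω i) - m) * (g (ω j) - m))) := by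
          rw [Finset.sum_comm]
          exact Finset.sum_congr rfl fun i _ => Finset.sum_comm
      _ = _ := by simp_rw [← Finset.mul_sum]
  have hdiag : ∀ i : Fin s, ∑ ω : Fin s → α, (∏ i', q (ω i')) * ((g (ω i) - m) * (g (ω i) - m))
      = ∑ e, q e * (g e - m) ^ 2 := by
    intro i
    have := aux_one q hq i (fun e => (g e - m) ^ 2)
    simpa [sq] using this
  have hoff : ∀ i j : Fin s, i ≠ j →
      ∑ ω : Fin s → α, (∏ i', q (ω i')) * ((g (ω i) - m) * (g (ω j) - m)) = 0 := by
    intro i j hij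
    rw [aux_two q hq hij (fun e => g e - m) (fun e => g e - m), hX0]
    ring
  have hsum : ∑ i : Fin s, ∑ j : Fin s,
      ∑ ω : Fin s → α, (∏ i', q (ω i')) * ((g (ω i) - m) * (g (ω j) - m))
      = (s : ℝ) * ∑ e, q e * (g e - m) ^ 2 := by
    have h2 : ∀ i : Fin s, ∑ j : Fin s,
        (∑ ω : Fin s → α, (∏ i', q (ω i')) * ((g (ω i) - m) * (g (ω j) - m)))
        = ∑ e, q e * (g e - m) ^ 2 := by
      intro i
      rw [Finset.sum_eq_single i (fun j _ hj => hoff i j (Ne.symm hj)) (by simp)]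
      exact hdiag i
    rw [Finset.sum_congr rfl fun i _ => h2 i]
    simp [Finset.card_univ, mul_comm]
  have hexpand : ∑ e, q e * (g e - m) ^ 2 = (∑ e, q e * g e ^ 2) - m ^ 2 := by
    have h1 : ∀ e, q e * (g e - m) ^ 2
        = q e * g e ^ 2 - 2 * m * (q e * g e) + m ^ 2 * q e := fun e => by ring
    rw [Finset.sum_congr rfl fun e _ => h1 e]
    rw [Finset.sum_add_distrib, Finset.sum_sub_distrib, ← Finset.mul_sum, ← Finset.mul_sum,
      hq, ← hm]
    ring
  rw [hmain, hsum, hexpand]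
  have hle : (∑ e, q e * g e ^ 2) - m ^ 2 ≤ ∑ e, q e * g e ^ 2 := by nlinarith [sq_nonneg m]
  calc ((s : ℝ)⁻¹) ^ 2 * ((s : ℝ) * ((∑ e, q e * g e ^ 2) - m ^ 2))
      = (s : ℝ)⁻¹ * ((∑ e, q e * g e ^ 2) - m ^ 2) := by field_simp
    _ ≤ (s : ℝ)⁻¹ * ∑ e, q e * g e ^ 2 :=
        mul_le_mul_of_nonneg_left hle (by positivity)


section helper
variable {V : Type*} [Fintype V] [DecidableEq V] {d k : ℕ}

/-- entry rewrite A1 -/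
lemma entryA1 (P : Matrix V V ℝ) (E : Finset (V × V)) (a : Matrix V (Fin k) ℝ)
    (p : V × V → ℝ) (s : ℕ) (ω : Fin s → E) (v : V) (j : Fin k) :
    ∑ u, (P v u *
        ((univ.filter fun i : Fin s => (ω i : V × V) = (v, u)).card : ℝ) /
        (s * p (v, u))) * a u j
      = (s : ℝ)⁻¹ * ∑ i : Fin s,
          (if (ω i : V × V).1 = v then
            P v (ω i : V × V).2 * a (ω i : V × V).2 j / p (ω i : V × V) else 0) := by
  calc ∑ u, (P v u *
        ((univ.filter fun i : Fin s => (ω i : V × V) = (v, u)).card : ℝ) /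
        (s * p (v, u))) * a u j
      = ∑ u, ∑ i : Fin s,
          (if (ω i : V × V) = (v, u) then P v u * a u j / ((s : ℝ) * p (v, u)) else 0) := by
        refine Finset.sum_congr rfl fun u _ => ?_
        have hN : ((univ.filter fun i : Fin s => (ω i : V × V) = (v, u)).card : ℝ)
            = ∑ i : Fin s, if (ω i : V × V) = (v, u) then (1 : ℝ) else 0 := by
          rw [Finset.card_filter, Nat.cast_sum]
          simp
        rw [hN, Finset.mul_sum, Finset.sum_div, Finset.sum_mul]
        refine Finset.sum_congr rfl fun i _ => ?_
        split_ifs <;> ring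
    _ = ∑ i : Fin s, ∑ u,
          (if (ω i : V × V) = (v, u) then P v u * a u j / ((s : ℝ) * p (v, u)) else 0) :=
        Finset.sum_comm
    _ = ∑ i : Fin s, (s : ℝ)⁻¹ *
          (if (ω i : V × V).1 = v then
            P v (ω i : V × V).2 * a (ω i : V × V).2 j / p (ω i : V × V) else 0) := by
        refine Finset.sum_congr rfl fun i _ => ?_
        set e : V × V := (ω i : V × V) with he
        by_cases h : e.1 = v
        · have hiff : ∀ u, (e = (v, u)) ↔ (u = e.2) := by
            intro u
            constructor
            · intro hh; rw [hh]
            · intro hh; rw [hh, ← h]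
          simp_rw [hiff]
          rw [Finset.sum_ite_eq' univ e.2 (fun u => P v u * a u j / ((s : ℝ) * p (v, u)))]
          have hpe : (v, e.2) = e := by rw [← h]
          simp only [Finset.mem_univ, if_true, h, if_pos, hpe]
          rw [div_eq_mul_inv, div_eq_mul_inv, mul_inv]
          ring
        · have hno : ∀ u, ¬(e = (v, u)) := by
            intro u hh
            exact h (by rw [hh])
          simp [hno, h]
    _ = _ := by rw [← Finset.mul_sum]

/-- entry rewrite A2 -/
lemma entryA2 (P : Matrix V V ℝ) (E : Finset (V × V))
    (hsupp : ∀ v u, (v, u) ∉ E → P v u = 0)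
    (a : Matrix V (Fin k) ℝ)
    (p : V × V → ℝ) (hp : ∀ e ∈ E, 0 < p e) (v : V) (j : Fin k) :
    ∑ u, P v u * a u j
      = ∑ e : E, p (e : V × V) *
          (if (e : V × V).1 = v then
            P v (e : V × V).2 * a (e : V × V).2 j / p (e : V × V) else 0) := by
  rw [Finset.sum_coe_sort E
    (fun e => p e * (if e.1 = v then P v e.2 * a e.2 j / p e else 0))]
  calc ∑ u, P v u * a u j
      = ∑ e : V × V, (if e.1 = v then P v e.2 * a e.2 j else 0) := by
        rw [Fintype.sum_prod_type, Finset.sum_comm]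
        simp [Finset.sum_ite_eq]
    _ = ∑ e ∈ E, (if e.1 = v then P v e.2 * a e.2 j else 0) := by
        refine (Finset.sum_subset (Finset.subset_univ E) ?_).symm
        intro e _ he
        split_ifs with h
        · have : (v, e.2) ∉ E := by rw [← h]; simpa using he
          rw [hsupp v e.2 this]; ring
        · rfl
    _ = _ := by
        refine Finset.sum_congr rfl fun e he => ?_
        split_ifs with h
        · rw [mul_comm (p e), div_mul_cancel₀ _ (hp e he).ne']
        · ring
end helper


/-- **Upper bound of the expected hidden embeddings' difference** (Theorem 2).
`Z = P H W` is the exact hidden embedding, where the propagation matrix `P`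
is supported on the edge set `E`.  `|E_s|` edges are sampled i.i.d., edge
`(v,u)` with probability `p (v,u)`, and the importance-weighted propagation
matrix is `(P̃)_{v,u} = P_{v,u} · (#occurrences of (v,u)) / (|E_s| · p (v,u))`.
If `‖H_{u,*} W‖₂ ≤ ξ` for every node `u`, then
`E[‖Z̃ − Z‖_F²] ≤ (1/|E_s|) ∑_{(v,u)∈E} ‖P_{*,u}‖₂² ξ² / p (v,u)`. -/
theorem expected_hidden_embedding_difference_bound
    {V : Type*} [Fintype V] [DecidableEq V] {d k : ℕ}
    (P : Matrix V V ℝ) (E : Finset (V × V))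
    (hsupp : ∀ v u, (v, u) ∉ E → P v u = 0)
    (H : Matrix V (Fin d) ℝ) (W : Matrix (Fin d) (Fin k) ℝ)
    (ξ : ℝ)
    (hξ : ∀ u, Real.sqrt (∑ j, ((H * W) u j) ^ 2) ≤ ξ)
    (p : V × V → ℝ) (hp : ∀ e ∈ E, 0 < p e) (hpsum : ∑ e ∈ E, p e = 1)
    (s : ℕ) (hs : 0 < s) :
    ∑ ω : Fin s → E, (∏ i, p (ω i : V × V)) *
        frobSq
          ((Matrix.of fun v u => P v u *
              ((univ.filter fun i : Fin s => (ω i : V × V) = (v, u)).card : ℝ) /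
              (s * p (v, u))) * H * W - P * H * W)
      ≤ (1 / s) * ∑ e ∈ E, (∑ v, (P v e.2) ^ 2) * ξ ^ 2 / p e := by
  classical
  set a : Matrix V (Fin k) ℝ := H * W with ha
  set g : V → Fin k → E → ℝ := fun v j e =>
    if (e : V × V).1 = v then P v (e : V × V).2 * a (e : V × V).2 j / p (e : V × V) else 0
    with hg
  have hq : ∑ e : E, p (e : V × V) = 1 := by
    rw [Finset.sum_coe_sort E p]; exact hpsum
  have hq0 : ∀ e : E, 0 ≤ p (e : V × V) := fun e => (hp _ e.2).le
  have claimA : ∀ (ω : Fin s → E) (v : V) (j : Fin k),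
      ((Matrix.of fun v u => P v u *
          ((univ.filter fun i : Fin s => (ω i : V × V) = (v, u)).card : ℝ) /
          (s * p (v, u))) * H * W - P * H * W) v j
        = (s : ℝ)⁻¹ * (∑ i, g v j (ω i)) - ∑ e : E, p (e : V × V) * g v j e := by
    intro ω v j
    rw [Matrix.sub_apply, Matrix.mul_assoc, Matrix.mul_assoc, Matrix.mul_apply,
      Matrix.mul_apply]
    congr 1
    · have h1 := entryA1 P E a p s ω v j
      simpa [hg] using h1
    · exact entryA2 P E hsupp a p hp v j
  calc ∑ ω : Fin s → E, (∏ i, p (ω i : V × V)) *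
        frobSq
          ((Matrix.of fun v u => P v u *
              ((univ.filter fun i : Fin s => (ω i : V × V) = (v, u)).card : ℝ) /
              (s * p (v, u))) * H * W - P * H * W)
      = ∑ ω : Fin s → E, ∑ v, ∑ j, (∏ i, p (ω i : V × V)) *
          ((s : ℝ)⁻¹ * (∑ i, g v j (ω i)) - ∑ e : E, p (e : V × V) * g v j e) ^ 2 := by
        refine Finset.sum_congr rfl fun ω _ => ?_
        rw [frobSq]
        simp_rw [Finset.mul_sum]
        exact Finset.sum_congr rfl fun v _ => Finset.sum_congr rfl fun j _ => by
          rw [claimA ω v j, Finset.mul_sum]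
    _ = ∑ v, ∑ j, ∑ ω : Fin s → E, (∏ i, p (ω i : V × V)) *
          ((s : ℝ)⁻¹ * (∑ i, g v j (ω i)) - ∑ e : E, p (e : V × V) * g v j e) ^ 2 := by
        rw [Finset.sum_comm]
        exact Finset.sum_congr rfl fun v _ => Finset.sum_comm
    _ ≤ ∑ v, ∑ j, (s : ℝ)⁻¹ * ∑ e : E, p (e : V × V) * (g v j e) ^ 2 := by
        refine Finset.sum_le_sum fun v _ => Finset.sum_le_sum fun j _ => ?_
        exact aux_var hs (fun e : E => p (e : V × V)) hq0 hq (g v j)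
    _ = (s : ℝ)⁻¹ * ∑ e : E, ∑ v, ∑ j, p (e : V × V) * (g v j e) ^ 2 := by
        have h1 : ∀ v : V, ∑ j, (s : ℝ)⁻¹ * ∑ e : E, p (e : V × V) * (g v j e) ^ 2
            = (s : ℝ)⁻¹ * ∑ j, ∑ e : E, p (e : V × V) * (g v j e) ^ 2 :=
          fun v => (Finset.mul_sum _ _ _).symm
        rw [Finset.sum_congr rfl fun v _ => h1 v, ← Finset.mul_sum]
        congr 1
        calc ∑ v, ∑ j, ∑ e : E, p (e : V × V) * (g v j e) ^ 2
            = ∑ v, ∑ e : E, ∑ j, p (e : V × V) * (g v j e) ^ 2 :=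
              Finset.sum_congr rfl fun v _ => Finset.sum_comm
          _ = ∑ e : E, ∑ v, ∑ j, p (e : V × V) * (g v j e) ^ 2 := Finset.sum_comm
    _ = (s : ℝ)⁻¹ * ∑ e : E,
          (P (e : V × V).1 (e : V × V).2) ^ 2 * (∑ j, a (e : V × V).2 j ^ 2) /
            p (e : V × V) := by
        congr 1
        refine Finset.sum_congr rfl fun e _ => ?_
        have hpe : p (e : V × V) ≠ 0 := (hp _ e.2).ne'
        calc ∑ v, ∑ j, p (e : V × V) * (g v j e) ^ 2
            = ∑ v, (if (e : V × V).1 = v then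
                ∑ j, p (e : V × V) *
                  (P v (e : V × V).2 * a (e : V × V).2 j / p (e : V × V)) ^ 2 else 0) := by
              refine Finset.sum_congr rfl fun v _ => ?_
              by_cases h : (e : V × V).1 = v
              · simp [hg, h]
              · simp [hg, h]
          _ = ∑ j, p (e : V × V) *
                (P (e : V × V).1 (e : V × V).2 * a (e : V × V).2 j / p (e : V × V)) ^ 2 := by
              rw [Finset.sum_ite_eq]
              simp
          _ = ∑ j, (P (e : V × V).1 (e : V × V).2) ^ 2 * a (e : V × V).2 j ^ 2 /
                p (e : V × V) := by
              refine Finset.sum_congr rfl fun j _ => ?_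
              field_simp
          _ = _ := by
              rw [← Finset.sum_div, ← Finset.mul_sum]
    _ ≤ (s : ℝ)⁻¹ * ∑ e : E,
          (∑ v, (P v (e : V × V).2) ^ 2) * ξ ^ 2 / p (e : V × V) := by
        refine mul_le_mul_of_nonneg_left (Finset.sum_le_sum fun e _ => ?_) (by positivity)
        have hpe : 0 < p (e : V × V) := hp _ e.2
        have hS0 : (0 : ℝ) ≤ ∑ j, a (e : V × V).2 j ^ 2 :=
          Finset.sum_nonneg fun j _ => sq_nonneg _
        have hSξ : ∑ j, a (e : V × V).2 j ^ 2 ≤ ξ ^ 2 := by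
          have h1 := hξ (e : V × V).2
          have h2 := Real.sq_sqrt hS0
          nlinarith [Real.sqrt_nonneg (∑ j, a (e : V × V).2 j ^ 2)]
        have hnum : (P (e : V × V).1 (e : V × V).2) ^ 2 * (∑ j, a (e : V × V).2 j ^ 2)
            ≤ (∑ v, (P v (e : V × V).2) ^ 2) * ξ ^ 2 := by
          refine mul_le_mul ?_ hSξ hS0 (Finset.sum_nonneg fun v _ => sq_nonneg _)
          exact Finset.single_le_sum (fun v _ => sq_nonneg (P v (e : V × V).2))
            (Finset.mem_univ _)
        exact div_le_div_of_nonneg_right hnum hpe.le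
    _ = (1 / s) * ∑ e ∈ E, (∑ v, (P v e.2) ^ 2) * ξ ^ 2 / p e := by
        rw [one_div, Finset.sum_coe_sort E
          (fun e => (∑ v, (P v e.2) ^ 2) * ξ ^ 2 / p e)]
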